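/- arXiv:1701.03522 — 2 statements merged into one kernel-verified Lean document; each statement's English description precedes it below -/
import Mathlib

section
/- Let m ≥ 1 be a natural number, M a real number with M ≥ 2^m, and a_1, …, a_m real numbers with 0 ≤ a_i ≤ 1 for all i. Then ∏_{i=1}^{m} (a_i·M + 1) ≤ (∏_{i=1}^{m} a_i)·M^m + (m+1)·M^{m-1}. -/
lemma aux_prod_bound {ι : Type*} (s : Finset ι) (M : ℝ) (hM : 0 ≤ M) (a : ι → ℝ)
    (h0 : ∀ i ∈ s, 0 ≤ a i) (h1 : ∀ i ∈ s, a i ≤ 1) :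
    ∏ i ∈ s, (a i * M + 1) + M ^ s.card ≤ (M + 1) ^ s.card + (∏ i ∈ s, a i) * M ^ s.card := by
  induction s using Finset.cons_induction with
  | empty => simp
  | cons j s hj ih =>
    have h0' : ∀ i ∈ s, 0 ≤ a i := fun i hi => h0 i (Finset.mem_cons_of_mem hi)
    have h1' : ∀ i ∈ s, a i ≤ 1 := fun i hi => h1 i (Finset.mem_cons_of_mem hi)
    have IH := ih h0' h1'
    have hP0 : 0 ≤ ∏ i ∈ s, a i := Finset.prod_nonneg h0'
    have hP1 : ∏ i ∈ s, a i ≤ 1 := Finset.prod_le_one h0' h1'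
    have haj0 : 0 ≤ a j := h0 j (Finset.mem_cons_self j s)
    have haj1 : a j ≤ 1 := h1 j (Finset.mem_cons_self j s)
    have hpow : M ^ s.card ≤ (M + 1) ^ s.card :=
      pow_le_pow_left₀ hM (by linarith) _
    have hMp : (0:ℝ) ≤ M ^ s.card := pow_nonneg hM _
    rw [Finset.prod_cons, Finset.prod_cons, Finset.card_cons, pow_succ, pow_succ]
    nlinarith [mul_le_mul_of_nonneg_left IH (by nlinarith : (0:ℝ) ≤ a j * M + 1),
      mul_nonneg (mul_nonneg (by linarith : (0:ℝ) ≤ 1 - a j) hM)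
        (by linarith : (0:ℝ) ≤ (M+1)^s.card - M ^ s.card),
      mul_nonneg (by linarith : (0:ℝ) ≤ 1 - ∏ i ∈ s, a i) hMp]

lemma aux_pow_bound : ∀ m : ℕ, 1 ≤ m → ∀ M : ℝ, (2:ℝ) ^ m ≤ M →
    (M + 1) ^ m * M ^ 2 ≤ M ^ (m + 2) + m * M ^ (m + 1) + 2 ^ m * M ^ m := by
  intro m hm
  induction m, hm using Nat.le_induction with
  | base => intro M hM; push_cast; ring_nf; nlinarith
  | succ n hn ih =>
    intro M hM
    have h2n : (2:ℝ) ^ n ≤ M :=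
      le_trans (pow_le_pow_right₀ (by norm_num) (Nat.le_succ n)) hM
    have hM0 : (0:ℝ) < M := lt_of_lt_of_le (pow_pos (by norm_num) _) hM
    have IH := ih M h2n
    have hMn : (0:ℝ) < M ^ n := pow_pos hM0 _
    have hmul := mul_le_mul_of_nonneg_left IH (by linarith : (0:ℝ) ≤ M + 1)
    have key : ((n:ℝ) + 2 ^ n) * M ^ (n+1) + 2 ^ n * M ^ n ≤ 2 ^ (n+1) * M ^ (n+1) := by
      have h1 : ((n:ℝ) + 1) * M ≤ 2 ^ n * M := by
        have : (n:ℝ) + 1 ≤ 2 ^ n := by exact_mod_cast Nat.succ_le_of_lt (Nat.lt_two_pow_self (n := n))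
        nlinarith
      have h2 : (n:ℝ) * M + 2 ^ n ≤ 2 ^ n * M := by nlinarith
      calc ((n:ℝ) + 2 ^ n) * M ^ (n+1) + 2 ^ n * M ^ n
          = ((n:ℝ) * M + 2 ^ n + 2 ^ n * M) * M ^ n := by ring
        _ ≤ (2 ^ n * M + 2 ^ n * M) * M ^ n := by nlinarith
        _ = 2 ^ (n+1) * M ^ (n+1) := by ring
    calc (M + 1) ^ (n + 1) * M ^ 2 = (M + 1) * ((M + 1) ^ n * M ^ 2) := by ring
      _ ≤ (M + 1) * (M ^ (n + 2) + n * M ^ (n + 1) + 2 ^ n * M ^ n) := hmul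
      _ = M ^ (n + 3) + ((n:ℝ) + 1) * M ^ (n + 2)
          + (((n:ℝ) + 2 ^ n) * M ^ (n+1) + 2 ^ n * M ^ n) := by ring
      _ ≤ M ^ (n + 3) + ((n:ℝ) + 1) * M ^ (n + 2) + 2 ^ (n+1) * M ^ (n+1) := by linarith
      _ = M ^ (n + 1 + 2) + (↑(n+1):ℝ) * M ^ (n + 1 + 1) + 2 ^ (n+1) * M ^ (n+1) := by
          push_cast; ring

/-- For `m ≥ 1`, a real `M ≥ 2^m` and reals `a_1, …, a_m ∈ [0,1]`,
`∏_{i=1}^{m} (a_i·M + 1) ≤ (∏_{i=1}^{m} a_i)·M^m + (m+1)·M^{m-1}`. -/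
theorem prod_mul_add_one_le (m : ℕ) (hm : 1 ≤ m) (M : ℝ) (hM : (2 : ℝ) ^ m ≤ M)
    (a : Fin m → ℝ) (h0 : ∀ i, 0 ≤ a i) (h1 : ∀ i, a i ≤ 1) :
    ∏ i, (a i * M + 1) ≤ (∏ i, a i) * M ^ m + (m + 1) * M ^ (m - 1) := by
  have hM0 : (0:ℝ) < M := lt_of_lt_of_le (pow_pos (by norm_num) _) hM
  have hA := aux_prod_bound Finset.univ M hM0.le a (fun i _ => h0 i) (fun i _ => h1 i)
  rw [Finset.card_univ, Fintype.card_fin] at hA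
  have hB := aux_pow_bound m hm M hM
  -- (M+1)^m ≤ M^m + (m+1) * M^(m-1)
  have hC : (M + 1) ^ m ≤ M ^ m + (m + 1) * M ^ (m - 1) := by
    have hsq : (0:ℝ) < M ^ 2 := by positivity
    rw [← mul_le_mul_iff_of_pos_right hsq]
    have hpow : M ^ (m - 1) * M ^ 2 = M ^ (m + 1) := by
      rw [← pow_add]; congr 1; omega
    have h2m : (2:ℝ) ^ m * M ^ m ≤ M ^ (m + 1) := by
      rw [pow_succ]; nlinarith [pow_nonneg hM0.le m]
    calc (M + 1) ^ m * M ^ 2 ≤ M ^ (m + 2) + m * M ^ (m + 1) + 2 ^ m * M ^ m := hB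
      _ ≤ M ^ (m + 2) + (m + 1) * M ^ (m + 1) := by linarith
      _ = (M ^ m + (m + 1) * M ^ (m - 1)) * M ^ 2 := by
          linear_combination (-(m:ℝ) - 1) * hpow
  linarith
end

section
/- Let b, L, k be natural numbers with k + 1 ≤ L ≤ b, and let n_0 ≥ n_1 ≥ … ≥ n_k ≥ 1 be positive integers. Then, as real numbers, (2^b)^{L-k-1} · (2^b/n_k + 1) · ∏_{i=1}^{k} ((n_i/n_{i-1})·2^b + 1) ≤ (2^b)^L/n_0 + (L+1)·(2^b)^{L-1}. Equivalently, dividing both sides by (2^b)^L, the normalized left-hand side is at most 1/n_0 + (L+1)/2^b. -/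
open Finset

private lemma prod_aux (B : ℝ) (hB : 0 ≤ B) (m : ℕ) (x : ℕ → ℝ)
    (h0 : ∀ i < m, 0 ≤ x i) (h1 : ∀ i < m, x i ≤ 1) :
    ∏ i ∈ range m, (x i * B + 1) ≤
      (∏ i ∈ range m, x i) * B ^ m + ((B + 1) ^ m - B ^ m) := by
  induction m with
  | zero => simp
  | succ m ih =>
    have h0' : ∀ i < m, 0 ≤ x i := fun i hi => h0 i (hi.trans (Nat.lt_succ_self m))
    have h1' : ∀ i < m, x i ≤ 1 := fun i hi => h1 i (hi.trans (Nat.lt_succ_self m))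
    have ih' := ih h0' h1'
    have hp0 : 0 ≤ ∏ i ∈ range m, x i :=
      Finset.prod_nonneg fun i hi => h0' i (mem_range.mp hi)
    have hp1 : ∏ i ∈ range m, x i ≤ 1 :=
      Finset.prod_le_one (fun i hi => h0' i (mem_range.mp hi))
        (fun i hi => h1' i (mem_range.mp hi))
    have hxm0 : 0 ≤ x m := h0 m (Nat.lt_succ_self m)
    have hxm1 : x m ≤ 1 := h1 m (Nat.lt_succ_self m)
    have hfac : (0:ℝ) ≤ x m * B + 1 := by positivity
    have hD : B ^ m ≤ (B + 1) ^ m := pow_le_pow_left₀ hB (by linarith) m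
    have hBm : (0:ℝ) ≤ B ^ m := pow_nonneg hB m
    rw [prod_range_succ, prod_range_succ]
    calc (∏ i ∈ range m, (x i * B + 1)) * (x m * B + 1)
        ≤ ((∏ i ∈ range m, x i) * B ^ m + ((B + 1) ^ m - B ^ m)) * (x m * B + 1) :=
          mul_le_mul_of_nonneg_right ih' hfac
      _ ≤ _ := by
          rw [pow_succ B m, pow_succ (B+1) m]
          nlinarith [mul_nonneg (mul_nonneg (sub_nonneg.mpr hD) hB) (sub_nonneg.mpr hxm1),
            mul_nonneg hBm (sub_nonneg.mpr hp1)]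

private lemma real_aux (M : ℝ) (hM : 2 ≤ M) : ∀ m : ℕ,
    (M + 1) ^ (m + 2) ≤ M ^ (m + 2) + ((m : ℝ) + 2) * M ^ (m + 1) + 2 ^ (m + 2) * M ^ m := by
  intro m
  induction m with
  | zero => norm_num; nlinarith
  | succ m ih =>
    have h1 : ((m : ℝ) + 2) ≤ 2 ^ (m + 1) := by
      have : m + 2 ≤ 2 ^ (m + 1) := Nat.succ_le_of_lt (Nat.lt_two_pow_self (n := m + 1))
      exact_mod_cast this
    have hA : (0:ℝ) ≤ M ^ m := by positivity
    have hQ : (0:ℝ) ≤ (2:ℝ) ^ (m + 1) := by positivity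
    have step1 : (M + 1) ^ (m + 1 + 2) = (M + 1) ^ (m + 2) * (M + 1) := by ring
    have step2 : (M + 1) ^ (m + 2) * (M + 1) ≤
        (M ^ (m + 2) + ((m : ℝ) + 2) * M ^ (m + 1) + 2 ^ (m + 2) * M ^ m) * (M + 1) := by
      apply mul_le_mul_of_nonneg_right ih (by linarith)
    have e1 : M ^ (m + 1) = M ^ m * M := pow_succ M m
    have e2 : M ^ (m + 2) = M ^ m * M * M := by rw [pow_succ, e1]
    have e3 : M ^ (m + 1 + 2) = M ^ m * M * M * M := by rw [show m+1+2 = m+3 from rfl, pow_succ, ← e2]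
    have e4 : (2:ℝ) ^ (m + 2) = 2 ^ (m + 1) * 2 := pow_succ 2 (m + 1)
    have e5 : (2:ℝ) ^ (m + 1 + 2) = 2 ^ (m + 1) * 4 := by
      rw [show m+1+2 = m+1+1+1 from rfl, pow_succ, pow_succ]; ring
    rw [step1]
    refine step2.trans ?_
    rw [e1, e2, e3, e4, e5]
    push_cast
    nlinarith [mul_nonneg (mul_nonneg (sub_nonneg.mpr h1) hA) (by linarith : (0:ℝ) ≤ M),
      mul_nonneg (mul_nonneg hQ hA) (by linarith : (0:ℝ) ≤ M - 2)]

private lemma real_cor (b k : ℕ) (hkb : k + 1 ≤ b) :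
    ((2:ℝ) ^ b + 1) ^ (k + 1) ≤ ((2:ℝ) ^ b) ^ (k + 1) + ((k : ℝ) + 2) * ((2:ℝ) ^ b) ^ k := by
  have hM : (2:ℝ) ≤ 2 ^ b := by
    calc (2:ℝ) = 2 ^ 1 := (pow_one 2).symm
    _ ≤ 2 ^ b := pow_le_pow_right₀ one_le_two (by omega)
  match k with
  | 0 => norm_num
  | (j+1) =>
    have h := real_aux (2 ^ b) hM j
    have h2 : (2:ℝ) ^ (j + 2) * ((2:ℝ) ^ b) ^ j ≤ ((2:ℝ) ^ b) ^ (j + 1) := by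
      have hle : (2:ℝ) ^ (j + 2) ≤ 2 ^ b := pow_le_pow_right₀ one_le_two (by omega)
      have hA : (0:ℝ) ≤ ((2:ℝ) ^ b) ^ j := by positivity
      calc (2:ℝ) ^ (j + 2) * ((2:ℝ) ^ b) ^ j ≤ 2 ^ b * ((2:ℝ) ^ b) ^ j :=
            mul_le_mul_of_nonneg_right hle hA
        _ = ((2:ℝ) ^ b) ^ (j + 1) := (pow_succ' _ j).symm
    have : ((2:ℝ) ^ b + 1) ^ (j + 2) ≤
        ((2:ℝ) ^ b) ^ (j + 2) + ((j:ℝ) + 2) * ((2:ℝ) ^ b) ^ (j + 1) + ((2:ℝ) ^ b) ^ (j + 1) := by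
      linarith
    push_cast
    calc ((2:ℝ) ^ b + 1) ^ (j + 1 + 1) = ((2:ℝ) ^ b + 1) ^ (j + 2) := by norm_num
      _ ≤ ((2:ℝ) ^ b) ^ (j + 2) + ((j:ℝ) + 2) * ((2:ℝ) ^ b) ^ (j + 1) + ((2:ℝ) ^ b) ^ (j + 1) := this
      _ = ((2:ℝ) ^ b) ^ (j + 1 + 1) + ((j:ℝ) + 1 + 2) * ((2:ℝ) ^ b) ^ (j + 1) := by ring

private lemma tel (n : ℕ → ℕ) : ∀ k, (∀ i ≤ k, 1 ≤ n i) →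
    ∏ i ∈ Finset.range k, ((n (i+1):ℝ)/(n i)) = (n k : ℝ)/(n 0) := by
  intro k
  induction k with
  | zero =>
    intro h
    have h0 : (0:ℝ) < n 0 := by exact_mod_cast h 0 le_rfl
    simp [div_self h0.ne']
  | succ k ih =>
    intro h
    have hk : (0:ℝ) < n k := by exact_mod_cast h k (Nat.le_succ k)
    have h0 : (0:ℝ) < n 0 := by exact_mod_cast h 0 (Nat.zero_le _)
    rw [prod_range_succ, ih (fun i hi => h i (hi.trans (Nat.le_succ k)))]
    field_simp

/-- The interval-size bound for the balanced Prefix Embedding: for `k + 1 ≤ L ≤ b` and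
positive integers `n 0 ≥ n 1 ≥ … ≥ n k ≥ 1` (nested subtree sizes),
`(2^b)^{L-k-1} · (2^b/n_k + 1) · ∏_{i=1}^{k} ((n_i/n_{i-1})·2^b + 1)
  ≤ (2^b)^L/n_0 + (L+1)·(2^b)^{L-1}`. -/
theorem prefix_embedding_interval_bound
    (b L k : ℕ) (hkL : k + 1 ≤ L) (hLb : L ≤ b) (n : ℕ → ℕ)
    (hpos : ∀ i ≤ k, 1 ≤ n i) (hmono : ∀ i < k, n (i + 1) ≤ n i) :
    ((2 : ℝ) ^ b) ^ (L - k - 1) * ((2 : ℝ) ^ b / (n k : ℝ) + 1) *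
        ∏ i ∈ Finset.range k, ((n (i + 1) : ℝ) / (n i : ℝ) * (2 : ℝ) ^ b + 1)
      ≤ ((2 : ℝ) ^ b) ^ L / (n 0 : ℝ) + (L + 1) * ((2 : ℝ) ^ b) ^ (L - 1) := by
  set B : ℝ := (2:ℝ) ^ b with hBdef
  have hB0 : (0:ℝ) < B := by positivity
  have hnk : (0:ℝ) < n k := by exact_mod_cast hpos k le_rfl
  have hn0 : (0:ℝ) < n 0 := by exact_mod_cast hpos 0 (Nat.zero_le k)
  set x : ℕ → ℝ := fun i => if i < k then (n (i+1) : ℝ)/(n i) else 1/(n k) with hx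
  have hx0 : ∀ i < k + 1, 0 ≤ x i := by
    intro i hi
    by_cases hik : i < k <;> simp only [hx, hik, if_true, if_false] <;> positivity
  have hx1 : ∀ i < k + 1, x i ≤ 1 := by
    intro i hi
    by_cases hik : i < k
    · have hni : (0:ℝ) < n i := by exact_mod_cast hpos i (by omega)
      simp only [hx, hik, if_true]
      rw [div_le_one hni]
      exact_mod_cast hmono i hik
    · simp only [hx, hik, if_false]
      rw [div_le_one hnk]
      exact_mod_cast hpos k le_rfl
  have hprodx : ∏ i ∈ range (k+1), x i = 1 / (n 0) := by
    rw [prod_range_succ]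
    have : ∏ i ∈ range k, x i = ∏ i ∈ range k, ((n (i+1):ℝ)/(n i)) :=
      Finset.prod_congr rfl (fun i hi => by simp [hx, mem_range.mp hi])
    rw [this, tel n k hpos]
    simp only [hx, lt_irrefl, if_false]
    field_simp
  have hprodfac : ∏ i ∈ range (k+1), (x i * B + 1) =
      (∏ i ∈ range k, ((n (i+1):ℝ)/(n i) * B + 1)) * (B / (n k) + 1) := by
    rw [prod_range_succ]
    congr 1
    · exact Finset.prod_congr rfl (fun i hi => by simp [hx, mem_range.mp hi])
    · simp only [hx, lt_irrefl, if_false]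
      rw [one_div, inv_mul_eq_div]
  have hmain := prod_aux B hB0.le (k+1) x hx0 hx1
  rw [hprodfac, hprodx] at hmain
  have hbin : (B + 1) ^ (k+1) - B ^ (k+1) ≤ (k + 2) * B ^ k := by
    have hc := real_cor b k (by omega)
    rw [hBdef]
    linarith
  have hP : (∏ i ∈ range k, ((n (i+1):ℝ)/(n i) * B + 1)) * (B / (n k) + 1) ≤
      1 / (n 0) * B ^ (k+1) + (k + 2) * B ^ k := by linarith
  have hpow0 : (0:ℝ) ≤ B ^ (L - k - 1) := by positivity
  have step : B ^ (L - k - 1) * (B / (n k) + 1) *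
      ∏ i ∈ range k, ((n (i+1):ℝ)/(n i) * B + 1) ≤
      B ^ (L - k - 1) * (1 / (n 0) * B ^ (k+1) + (k + 2) * B ^ k) := by
    rw [mul_assoc]
    apply mul_le_mul_of_nonneg_left _ hpow0
    calc (B / (n k) + 1) * ∏ i ∈ range k, ((n (i+1):ℝ)/(n i) * B + 1)
        = (∏ i ∈ range k, ((n (i+1):ℝ)/(n i) * B + 1)) * (B / (n k) + 1) := mul_comm _ _
      _ ≤ _ := hP
  refine le_trans step ?_
  have e1 : B ^ (L - k - 1) * B ^ (k + 1) = B ^ L := by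
    rw [← pow_add]; congr 1; omega
  have e2 : B ^ (L - k - 1) * B ^ k = B ^ (L - 1) := by
    rw [← pow_add]; congr 1; omega
  have hk2 : ((k:ℝ) + 2) ≤ (L:ℝ) + 1 := by exact_mod_cast by omega
  have hBL1 : (0:ℝ) ≤ B ^ (L - 1) := by positivity
  calc B ^ (L - k - 1) * (1 / (n 0) * B ^ (k+1) + (k + 2) * B ^ k)
      = B ^ L / (n 0) + (k + 2) * B ^ (L - 1) := by
        rw [mul_add]
        rw [show B ^ (L-k-1) * (1 / (n 0) * B ^ (k+1)) = (B ^ (L-k-1) * B ^ (k+1)) / (n 0) by ring,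
          show B ^ (L-k-1) * ((k+2) * B ^ k) = (k+2) * (B ^ (L-k-1) * B ^ k) by ring, e1, e2]
    _ ≤ _ := by
        have : ((k:ℝ) + 2) * B ^ (L-1) ≤ ((L:ℝ) + 1) * B ^ (L-1) :=
          mul_le_mul_of_nonneg_right hk2 hBL1
        linarith
end
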